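/- For every ξ ∈ ℂ with 0 < |ξ| < 1, all α, α' ∈ ℂ, every integer m ≥ 0, and every c with |ξ| < c < 1/|ξ|, one has (2πi)^{-1} ∮_{|ζ|=c} (1 − ξζ)^{−α} (1 − ξ/ζ)^{α'} ζ^{−m−1} dζ = ((α)_m / m!) · ξ^m · F(α+m, −α'; m+1; ξ²). -/

import Mathlib

open Complex

/-- The Pochhammer symbol `(a)_m = a (a+1) ⋯ (a+m−1)`, with `(a)_0 = 1`. -/
noncomputable def pochhammer' (a : ℂ) (m : ℕ) : ℂ := ∏ k ∈ Finset.range m, (a + (k : ℂ))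

/-- The Gauss hypergeometric function `F(a, b; c; x)` with positive integer
parameter `c`. -/
noncomputable def gaussHyp (a b : ℂ) (c : ℕ) (x : ℂ) : ℂ :=
  ∑' n : ℕ, pochhammer' a n * pochhammer' b n * x ^ n /
    (pochhammer' (c : ℂ) n * (n.factorial : ℂ))

open Filter Topology

lemma poch_zero (a : ℂ) : pochhammer' a 0 = 1 := by simp [pochhammer']

lemma poch_one (a : ℂ) : pochhammer' a 1 = a := by simp [pochhammer']

lemma poch_succ (a : ℂ) (n : ℕ) : pochhammer' a (n + 1) = pochhammer' a n * (a + n) :=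
  Finset.prod_range_succ _ _

lemma poch_add (a : ℂ) (m k : ℕ) :
    pochhammer' a (m + k) = pochhammer' a m * pochhammer' (a + m) k := by
  induction k with
  | zero => simp [pochhammer']
  | succ k ih =>
    rw [show m + (k + 1) = (m + k) + 1 from rfl, poch_succ, ih, poch_succ]
    push_cast
    ring

lemma poch_nat_factorial (m k : ℕ) :
    pochhammer' ((m : ℂ) + 1) k * (m.factorial : ℂ) = ((m + k).factorial : ℂ) := by
  induction k with
  | zero => simp [pochhammer']
  | succ k ih =>
    rw [poch_succ, mul_right_comm, ih, show m + (k + 1) = (m + k) + 1 from rfl]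
    push_cast [Nat.factorial_succ]
    ring

lemma poch_nat_ne_zero (m k : ℕ) : pochhammer' ((m : ℂ) + 1) k ≠ 0 := by
  unfold pochhammer'
  rw [Finset.prod_ne_zero_iff]
  intro j _
  have : ((m + 1 + j : ℕ) : ℂ) ≠ 0 := Nat.cast_ne_zero.mpr (by omega)
  convert this using 1
  push_cast
  ring

lemma norm_add_nat_le (a : ℂ) (n : ℕ) : ‖a + (n : ℂ)‖ ≤ ‖a‖ + n := by
  refine (norm_add_le _ _).trans ?_
  simp

lemma summable_poch_sq (a : ℂ) {r : ℝ} (h0 : 0 ≤ r) (h1 : r < 1) :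
    Summable (fun n : ℕ => ((n : ℝ) + 1) ^ 2 * (‖pochhammer' a n‖ / n.factorial) * r ^ n) := by
  obtain ⟨r', hrr', hr'1⟩ := exists_between h1
  apply summable_of_ratio_norm_eventually_le hr'1
  have h1n : Tendsto (fun n : ℕ => 1 / ((n : ℝ) + 1)) atTop (𝓝 0) :=
    tendsto_one_div_add_atTop_nhds_zero_nat
  have hA : Tendsto (fun n : ℕ => 1 + 1 / ((n : ℝ) + 1)) atTop (𝓝 1) := by
    have := h1n.const_add (1 : ℝ); simpa using this
  have hB : Tendsto (fun n : ℕ => 1 + (‖a‖ - 1) * (1 / ((n : ℝ) + 1))) atTop (𝓝 1) := by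
    have := (h1n.const_mul (‖a‖ - 1)).const_add (1 : ℝ); simpa using this
  have hq : Tendsto
      (fun n : ℕ => (1 + 1 / ((n : ℝ) + 1)) ^ 2 * (1 + (‖a‖ - 1) * (1 / ((n : ℝ) + 1))) * r)
      atTop (𝓝 r) := by
    have := ((hA.pow 2).mul hB).mul_const r
    simpa using this
  filter_upwards [hq.eventually_le_const hrr'] with n hn
  have hfn : (0 : ℝ) ≤ ((n : ℝ) + 1) ^ 2 * (‖pochhammer' a n‖ / n.factorial) * r ^ n := by
    positivity
  rw [Real.norm_of_nonneg (by positivity), Real.norm_of_nonneg hfn]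
  have hfac : ((n.factorial : ℝ)) ≠ 0 := Nat.cast_ne_zero.mpr n.factorial_ne_zero
  have hn1 : ((n : ℝ) + 1) ≠ 0 := by positivity
  have hP : ‖pochhammer' a (n + 1)‖ ≤ ‖pochhammer' a n‖ * (‖a‖ + n) := by
    rw [poch_succ, norm_mul]
    exact mul_le_mul_of_nonneg_left (norm_add_nat_le a n) (norm_nonneg _)
  calc (((n + 1 : ℕ) : ℝ) + 1) ^ 2 * (‖pochhammer' a (n + 1)‖ / (n + 1).factorial) * r ^ (n + 1)
      ≤ (((n : ℝ) + 2) ^ 2) * ((‖pochhammer' a n‖ * (‖a‖ + n)) / (((n : ℝ) + 1) * n.factorial))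
        * r ^ (n + 1) := by
        push_cast [Nat.factorial_succ]
        rw [show ((n : ℝ) + 1 + 1) = (n : ℝ) + 2 by ring]
        gcongr
    _ = ((1 + 1 / ((n : ℝ) + 1)) ^ 2 * (1 + (‖a‖ - 1) * (1 / ((n : ℝ) + 1))) * r) *
        (((n : ℝ) + 1) ^ 2 * (‖pochhammer' a n‖ / n.factorial) * r ^ n) := by
        field_simp
        ring
    _ ≤ r' * (((n : ℝ) + 1) ^ 2 * (‖pochhammer' a n‖ / n.factorial) * r ^ n) := by
        exact mul_le_mul_of_nonneg_right hn (by positivity)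

lemma summable_poch_one (a : ℂ) {r : ℝ} (h0 : 0 ≤ r) (h1 : r < 1) :
    Summable (fun n : ℕ => (‖pochhammer' a n‖ / n.factorial) * r ^ n) := by
  refine (summable_poch_sq a h0 h1).of_nonneg_of_le (fun n => by positivity) (fun n => ?_)
  have h : (1 : ℝ) ≤ ((n : ℝ) + 1) ^ 2 := by nlinarith [Nat.cast_nonneg (α := ℝ) n]
  nlinarith [mul_nonneg (div_nonneg (norm_nonneg (pochhammer' a n))
    (Nat.cast_nonneg n.factorial)) (pow_nonneg h0 n)]

lemma summable_binomial_term (s : ℂ) {z : ℂ} (hz : ‖z‖ < 1) :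
    Summable (fun n : ℕ => pochhammer' s n / n.factorial * z ^ n) := by
  apply Summable.of_norm
  have h : (fun n : ℕ => ‖pochhammer' s n / (n.factorial : ℂ) * z ^ n‖)
      = fun n => (‖pochhammer' s n‖ / n.factorial) * ‖z‖ ^ n := by
    funext n
    rw [norm_mul, norm_div, norm_pow]
    norm_num
  rw [h]
  exact summable_poch_one s (norm_nonneg z) hz

lemma summable_shift_term (s : ℂ) {z : ℂ} (hz : ‖z‖ < 1) :
    Summable (fun n : ℕ => pochhammer' s (n + 1) / n.factorial * z ^ n) := by
  apply Summable.of_norm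
  refine (((summable_poch_sq s (norm_nonneg z) hz).mul_left (‖s‖ + 1)).of_nonneg_of_le
    (fun n => norm_nonneg _) (fun n => ?_))
  rw [norm_mul, norm_div, norm_pow]
  norm_num
  have h1 : ‖pochhammer' s (n + 1)‖ ≤ ‖pochhammer' s n‖ * (‖s‖ + n) := by
    rw [poch_succ, norm_mul]
    exact mul_le_mul_of_nonneg_left (norm_add_nat_le s n) (norm_nonneg _)
  have h2 : (‖s‖ + (n : ℝ)) ≤ (‖s‖ + 1) * ((n : ℝ) + 1) ^ 2 := by
    nlinarith [norm_nonneg s, Nat.cast_nonneg (α := ℝ) n, sq_nonneg ((n : ℝ)),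
      mul_nonneg (norm_nonneg s) (sq_nonneg ((n : ℝ))),
      mul_nonneg (norm_nonneg s) (Nat.cast_nonneg (α := ℝ) n)]
  calc ‖pochhammer' s (n + 1)‖ / n.factorial * ‖z‖ ^ n
      ≤ (‖pochhammer' s n‖ * ((‖s‖ + 1) * ((n : ℝ) + 1) ^ 2)) / n.factorial * ‖z‖ ^ n := by
        gcongr
        exact h1.trans (mul_le_mul_of_nonneg_left h2 (norm_nonneg _))
    _ = (‖s‖ + 1) * (((n : ℝ) + 1) ^ 2 * (‖pochhammer' s n‖ / n.factorial) * ‖z‖ ^ n) := by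
        ring

set_option maxHeartbeats 1000000 in
lemma hasSum_binomial (s : ℂ) {w : ℂ} (hw : ‖w‖ < 1) :
    HasSum (fun n : ℕ => pochhammer' s n / n.factorial * w ^ n) ((1 - w) ^ (-s)) := by
  set cc : ℕ → ℂ := fun n => pochhammer' s n / n.factorial with hcc
  set f : ℂ → ℂ := fun z => ∑' n : ℕ, cc n * z ^ n with hf
  -- term-by-term derivative
  have hasDeriv : ∀ y : ℂ, ‖y‖ < 1 →
      HasDerivAt f (∑' n : ℕ, cc n * ((n : ℂ) * y ^ (n - 1))) y := by
    intro y hy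
    set ρ : ℝ := (‖y‖ + 1) / 2 with hρ
    have hρ0 : 0 < ρ := by positivity
    have hρ1 : ρ < 1 := by rw [hρ]; linarith
    have hyρ : ‖y‖ < ρ := by rw [hρ]; linarith [norm_nonneg y]
    have hkey : ∀ n : ℕ, (n : ℝ) * ρ ^ (n - 1) ≤ ρ⁻¹ * ((n : ℝ) + 1) ^ 2 * ρ ^ n := by
      intro n
      match n with
      | 0 => simp; positivity
      | (k + 1) =>
        have hrw : ρ⁻¹ * (((k + 1 : ℕ) : ℝ) + 1) ^ 2 * ρ ^ (k + 1)
            = (((k : ℝ) + 2) ^ 2) * ρ ^ k := by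
          rw [pow_succ]
          push_cast
          field_simp
          ring
        rw [hrw]
        have : (((k + 1 : ℕ) : ℝ)) ≤ ((k : ℝ) + 2) ^ 2 := by
          push_cast
          nlinarith [Nat.cast_nonneg (α := ℝ) k]
        calc (((k + 1 : ℕ) : ℝ)) * ρ ^ ((k + 1) - 1)
            = (((k + 1 : ℕ) : ℝ)) * ρ ^ k := rfl
          _ ≤ ((k : ℝ) + 2) ^ 2 * ρ ^ k :=
              mul_le_mul_of_nonneg_right this (pow_nonneg hρ0.le k)
    have hu_sum : Summable (fun n : ℕ => (‖pochhammer' s n‖ / n.factorial) * ((n : ℝ) * ρ ^ (n - 1))) := by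
      refine ((summable_poch_sq s hρ0.le hρ1).mul_left ρ⁻¹).of_nonneg_of_le
        (fun n => by positivity) (fun n => ?_)
      calc (‖pochhammer' s n‖ / n.factorial) * ((n : ℝ) * ρ ^ (n - 1))
          ≤ (‖pochhammer' s n‖ / n.factorial) * (ρ⁻¹ * ((n : ℝ) + 1) ^ 2 * ρ ^ n) :=
            mul_le_mul_of_nonneg_left (hkey n) (by positivity)
        _ = ρ⁻¹ * (((n : ℝ) + 1) ^ 2 * (‖pochhammer' s n‖ / n.factorial) * ρ ^ n) := by ring
    refine hasDerivAt_tsum_of_isPreconnected hu_sum Metric.isOpen_ball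
      ((convex_ball (0 : ℂ) ρ).isPreconnected)
      (g := fun n z => cc n * z ^ n) (g' := fun n z => cc n * ((n : ℂ) * z ^ (n - 1)))
      (fun n z _ => (hasDerivAt_pow n z).const_mul (cc n))
      (fun n z hzt => ?_) (Metric.mem_ball_self hρ0) ?_ (mem_ball_zero_iff.mpr hyρ)
    · have hzρ : ‖z‖ ≤ ρ := le_of_lt (mem_ball_zero_iff.mp hzt)
      rw [norm_mul, norm_mul, norm_pow]
      have h1 : ‖cc n‖ = ‖pochhammer' s n‖ / n.factorial := by
        rw [hcc]
        rw [norm_div]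
        norm_num
      rw [h1, Complex.norm_natCast]
      gcongr
    · exact summable_binomial_term s (by simp : ‖(0 : ℂ)‖ < 1)
  -- the ODE : (1 - y) * f'(y) = s * f(y)
  have claim : ∀ y : ℂ, ‖y‖ < 1 →
      (1 - y) * (∑' n : ℕ, pochhammer' s (n + 1) / n.factorial * y ^ n) = s * f y := by
    intro y hy
    set c' : ℕ → ℂ := fun n => pochhammer' s (n + 1) / n.factorial with hc'
    have hS : Summable (fun n => c' n * y ^ n) := by
      have := summable_shift_term s hy
      apply this.congr
      intro n
      rw [hc']
    have hS1 : Summable (fun n : ℕ => c' (n + 1) * y ^ (n + 1)) :=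
      (_root_.summable_nat_add_iff 1).mpr hS
    have hSb : Summable (fun n : ℕ => c' n * y ^ (n + 1)) :=
      (hS.mul_left y).congr (fun n => by ring)
    have key : ∀ n : ℕ, c' (n + 1) - c' n = s * (pochhammer' s (n + 1) / ((n + 1).factorial : ℂ)) := by
      intro n
      have h1 : ((n.factorial : ℂ)) ≠ 0 := Nat.cast_ne_zero.mpr n.factorial_ne_zero
      have h2 : (((n + 1) : ℂ)) ≠ 0 := by exact_mod_cast Nat.succ_ne_zero n
      simp only [hc']
      rw [show n + 1 + 1 = (n + 1) + 1 from rfl, poch_succ s (n + 1), Nat.factorial_succ n]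
      push_cast
      field_simp
      ring
    have hT0 : (∑' n : ℕ, c' n * y ^ n) = c' 0 + ∑' n : ℕ, c' (n + 1) * y ^ (n + 1) := by
      rw [Summable.tsum_eq_zero_add hS]
      norm_num
    have hyT : y * (∑' n : ℕ, c' n * y ^ n) = ∑' n : ℕ, c' n * y ^ (n + 1) := by
      rw [← tsum_mul_left]
      exact tsum_congr fun n => by ring
    have hsub : (1 - y) * (∑' n : ℕ, c' n * y ^ n)
        = c' 0 + ∑' n : ℕ, (c' (n + 1) - c' n) * y ^ (n + 1) := by
      have hexp : (1 - y) * (∑' n : ℕ, c' n * y ^ n)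
          = (∑' n : ℕ, c' n * y ^ n) - y * (∑' n : ℕ, c' n * y ^ n) := by ring
      rw [hexp, hyT, hT0, add_sub_assoc]
      congr 1
      rw [← Summable.tsum_sub hS1 hSb]
      exact tsum_congr fun n => by ring
    have hR : s * f y = s * cc 0 + ∑' n : ℕ, s * (cc (n + 1) * y ^ (n + 1)) := by
      rw [hf]
      simp only
      rw [← tsum_mul_left, Summable.tsum_eq_zero_add (((summable_binomial_term s hy).congr
        (fun n => by rw [hcc])).mul_left s)]
      norm_num
    rw [hsub, hR]
    congr 1
    · simp [hc', hcc, poch_one, poch_zero]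
    · exact tsum_congr fun n => by rw [key n, hcc]; ring
  -- f is constant after multiplying by (1-z)^s
  have hconst : ∀ z : ℂ, ‖z‖ < 1 → (1 - z) ^ s * f z = 1 := by
    intro z hz
    set h : ℂ → ℂ := fun y => (1 - y) ^ s * f y with hh
    have hderiv : ∀ y ∈ Metric.ball (0 : ℂ) 1, HasDerivWithinAt h 0 (Metric.ball (0 : ℂ) 1) y := by
      intro y hy
      have hy1 : ‖y‖ < 1 := mem_ball_zero_iff.mp hy
      have h10 : (1 : ℂ) - y ≠ 0 := by
        intro h0
        rw [sub_eq_zero] at h0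
        rw [← h0] at hy1
        simp at hy1
      have hbase : (1 - y) ∈ Complex.slitPlane := by
        apply Complex.mem_slitPlane_iff.mpr
        left
        simp only [Complex.sub_re, Complex.one_re]
        have hre : y.re ≤ ‖y‖ := (le_abs_self _).trans (Complex.abs_re_le_norm y)
        linarith
      have h1 : HasDerivAt (fun y : ℂ => (1 - y) ^ s) (s * (1 - y) ^ (s - 1) * (-1)) y := by
        have hid : HasDerivAt (fun y : ℂ => 1 - y) (-1) y := by
          simpa using (hasDerivAt_id y).const_sub 1
        exact hid.cpow_const hbase
      have h2 := hasDeriv y hy1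
      have hshift : ∀ n : ℕ, cc (n + 1) * (((n + 1 : ℕ) : ℂ) * y ^ n)
          = pochhammer' s (n + 1) / (n.factorial : ℂ) * y ^ n := by
        intro n
        have hn2 : (((n + 1) : ℂ)) ≠ 0 := by exact_mod_cast Nat.succ_ne_zero n
        have hn1 : ((n.factorial : ℂ)) ≠ 0 := Nat.cast_ne_zero.mpr n.factorial_ne_zero
        simp only [hcc]
        rw [Nat.factorial_succ n]
        push_cast
        field_simp
      have hg'sum : Summable (fun n : ℕ => cc n * ((n : ℂ) * y ^ (n - 1))) := by
        apply (_root_.summable_nat_add_iff 1).mp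
        exact (summable_shift_term s hy1).congr (fun n => by
          rw [← hshift n]
          norm_num)
      have hDeq : (∑' n : ℕ, cc n * ((n : ℂ) * y ^ (n - 1)))
          = ∑' n : ℕ, pochhammer' s (n + 1) / (n.factorial : ℂ) * y ^ n := by
        rw [Summable.tsum_eq_zero_add hg'sum]
        simp only [Nat.cast_zero, zero_mul, mul_zero, zero_add]
        refine tsum_congr fun n => ?_
        rw [← hshift n]
        norm_num
      rw [hDeq] at h2
      have h3 := h1.mul h2
      have hpow : (1 - y) ^ s = (1 - y) ^ (s - 1) * (1 - y) := by
        conv_lhs => rw [show s = (s - 1) + 1 by ring]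
        rw [Complex.cpow_add _ _ h10, Complex.cpow_one]
      have hcl := claim y hy1
      have hzero : s * (1 - y) ^ (s - 1) * (-1) * f y
          + (1 - y) ^ s * (∑' n : ℕ, pochhammer' s (n + 1) / (n.factorial : ℂ) * y ^ n) = 0 := by
        linear_combination (∑' n : ℕ, pochhammer' s (n + 1) / (n.factorial : ℂ) * y ^ n) * hpow
          + (1 - y) ^ (s - 1) * hcl
      have h4 : HasDerivAt h 0 y := hzero ▸ h3
      exact h4.hasDerivWithinAt
    have hle := (convex_ball (0 : ℂ) 1).norm_image_sub_le_of_norm_hasDerivWithin_le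
      (f' := fun _ => (0 : ℂ)) (C := 0) hderiv (fun y _ => by simp)
      (Metric.mem_ball_self one_pos) (mem_ball_zero_iff.mpr hz)
    have heq : h z = h 0 := by
      have : ‖h z - h 0‖ ≤ 0 := by simpa using hle
      exact sub_eq_zero.mp (norm_le_zero_iff.mp this)
    have hf0 : f 0 = 1 := by
      rw [hf]
      simp only
      rw [tsum_eq_single 0 (fun n hn => by simp [zero_pow hn])]
      simp [hcc, poch_zero]
    show h z = 1
    rw [heq, hh]
    simp [hf0]
  -- conclude
  have h10 : (1 : ℂ) - w ≠ 0 := by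
    intro h0
    rw [sub_eq_zero] at h0
    rw [← h0] at hw
    simp at hw
  have hcw := hconst w hw
  have hps : (1 - w) ^ s ≠ 0 := by
    intro h0
    rw [h0, zero_mul] at hcw
    exact one_ne_zero hcw.symm
  have hfw : f w = ((1 - w) ^ s)⁻¹ :=
    mul_left_cancel₀ hps (by rw [hcw, mul_inv_cancel₀ hps])
  have hmain : HasSum (fun n : ℕ => cc n * w ^ n) (f w) := (summable_binomial_term s hw).hasSum
  rw [hfw, ← Complex.cpow_neg] at hmain
  exact hmain

lemma summable_norm_binomial (s : ℂ) {z : ℂ} (hz : ‖z‖ < 1) :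
    Summable (fun n : ℕ => ‖pochhammer' s n / (n.factorial : ℂ) * z ^ n‖) := by
  have h : (fun n : ℕ => ‖pochhammer' s n / (n.factorial : ℂ) * z ^ n‖)
      = fun n => (‖pochhammer' s n‖ / n.factorial) * ‖z‖ ^ n := by
    funext n
    rw [norm_mul, norm_div, norm_pow]
    norm_num
  rw [h]
  exact summable_poch_one s (norm_nonneg z) hz


set_option maxHeartbeats 1000000 in
theorem gauss_contour_integral
    (ξ : ℂ) (hξ0 : ξ ≠ 0) (hξ1 : ‖ξ‖ < 1) (α α' : ℂ) (m : ℕ) (c : ℝ)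
    (hc1 : ‖ξ‖ < c) (hc2 : c < 1 / ‖ξ‖) :
    (2 * Real.pi * Complex.I)⁻¹ *
        (∮ ζ in C(0, c),
          (1 - ξ * ζ) ^ (-α) * (1 - ξ / ζ) ^ α' * ζ ^ (-(m : ℤ) - 1)) =
      pochhammer' α m / (m.factorial : ℂ) * ξ ^ m *
        gaussHyp (α + m) (-α') (m + 1) (ξ ^ 2) := by
  have habs : 0 < ‖ξ‖ := norm_pos_iff.mpr hξ0
  have hc0 : 0 < c := habs.trans hc1
  have hr1 : ‖ξ‖ * c < 1 := by
    have h := (lt_div_iff₀ habs).mp hc2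
    linarith [h, mul_comm c (‖ξ‖)]
  have hr2 : ‖ξ‖ / c < 1 := (div_lt_one hc0).mpr hc1
  have hζabs : ∀ θ : ℝ, ‖circleMap 0 c θ‖ = c := by
    intro θ; rw [norm_circleMap_zero]; exact abs_of_pos hc0
  have hζ0 : ∀ θ : ℝ, circleMap 0 c θ ≠ 0 := fun θ => circleMap_ne_center hc0.ne'
  have hn1 : ∀ θ : ℝ, ‖ξ * circleMap 0 c θ‖ < 1 := by
    intro θ
    rw [norm_mul, hζabs θ]
    exact hr1
  have hn2 : ∀ θ : ℝ, ‖ξ / circleMap 0 c θ‖ < 1 := by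
    intro θ
    rw [norm_div, hζabs θ]
    exact hr2
  -- the integrand expanded as a double series, pointwise on the circle
  have hPt : ∀ θ : ℝ, HasSum
      (fun p : ℕ × ℕ =>
        (pochhammer' α p.1 / (p.1.factorial : ℂ) * (ξ * circleMap 0 c θ) ^ p.1) *
        (pochhammer' (-α') p.2 / (p.2.factorial : ℂ) * (ξ / circleMap 0 c θ) ^ p.2) *
        (circleMap 0 c θ) ^ (-(m : ℤ) - 1))
      ((1 - ξ * circleMap 0 c θ) ^ (-α) * (1 - ξ / circleMap 0 c θ) ^ α' *
        (circleMap 0 c θ) ^ (-(m : ℤ) - 1)) := by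
    intro θ
    have hA := hasSum_binomial α (hn1 θ)
    have hB := hasSum_binomial (-α') (hn2 θ)
    rw [neg_neg] at hB
    have hsummul : Summable (fun p : ℕ × ℕ =>
        (pochhammer' α p.1 / (p.1.factorial : ℂ) * (ξ * circleMap 0 c θ) ^ p.1) *
        (pochhammer' (-α') p.2 / (p.2.factorial : ℂ) * (ξ / circleMap 0 c θ) ^ p.2)) :=
      summable_mul_of_summable_norm
        (f := fun j => pochhammer' α j / (j.factorial : ℂ) * (ξ * circleMap 0 c θ) ^ j)
        (g := fun k => pochhammer' (-α') k / (k.factorial : ℂ) * (ξ / circleMap 0 c θ) ^ k)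
        (summable_norm_binomial α (hn1 θ)) (summable_norm_binomial (-α') (hn2 θ))
    exact (hA.mul hB hsummul).mul_right _
  -- the family of functions to integrate
  set F : ℕ × ℕ → ℝ → ℂ := fun p θ =>
    (circleMap 0 c θ * I) *
      ((pochhammer' α p.1 / (p.1.factorial : ℂ) * (ξ * circleMap 0 c θ) ^ p.1) *
       (pochhammer' (-α') p.2 / (p.2.factorial : ℂ) * (ξ / circleMap 0 c θ) ^ p.2) *
       (circleMap 0 c θ) ^ (-(m : ℤ) - 1)) with hF
  have hcont : ∀ p : ℕ × ℕ, Continuous (F p) := by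
    intro p
    have h1 : Continuous fun θ => circleMap 0 c θ := continuous_circleMap 0 c
    have h2 : Continuous fun θ => (circleMap 0 c θ) ^ (-(m : ℤ) - 1) :=
      h1.zpow₀ _ (fun θ => Or.inl (hζ0 θ))
    have h3 : Continuous fun θ => (ξ * circleMap 0 c θ) ^ p.1 :=
      (continuous_const.mul h1).pow p.1
    have h4 : Continuous fun θ => (ξ / circleMap 0 c θ) ^ p.2 :=
      (continuous_const.div h1 hζ0).pow p.2
    exact (h1.mul continuous_const).mul
      (((continuous_const.mul h3).mul (continuous_const.mul h4)).mul h2)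
  have hFnorm : ∀ (p : ℕ × ℕ) (θ : ℝ), ‖F p θ‖ = (c * c ^ (-(m : ℤ) - 1)) *
      ((‖pochhammer' α p.1‖ / p.1.factorial * (‖ξ‖ * c) ^ p.1) *
       (‖pochhammer' (-α') p.2‖ / p.2.factorial * (‖ξ‖ / c) ^ p.2)) := by
    intro p θ
    rw [hF]
    simp only [norm_mul, norm_div, norm_pow, norm_zpow, Complex.norm_I,
      Complex.norm_natCast, hζabs θ]
    ring
  have hFintegral : ∀ p : ℕ × ℕ, (∫ θ in Set.Ioc 0 (2 * Real.pi), ‖F p θ‖) =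
      (2 * Real.pi) * ((c * c ^ (-(m : ℤ) - 1)) *
      ((‖pochhammer' α p.1‖ / p.1.factorial * (‖ξ‖ * c) ^ p.1) *
       (‖pochhammer' (-α') p.2‖ / p.2.factorial * (‖ξ‖ / c) ^ p.2))) := by
    intro p
    have : (fun θ : ℝ => ‖F p θ‖) = fun _ : ℝ => (c * c ^ (-(m : ℤ) - 1)) *
        ((‖pochhammer' α p.1‖ / p.1.factorial * (‖ξ‖ * c) ^ p.1) *
         (‖pochhammer' (-α') p.2‖ / p.2.factorial * (‖ξ‖ / c) ^ p.2)) :=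
      funext (hFnorm p)
    rw [this, MeasureTheory.setIntegral_const, Real.volume_real_Ioc_of_le (by linarith [Real.pi_pos])]
    rw [smul_eq_mul]
    ring
  have hSummInt : Summable (fun p : ℕ × ℕ => ∫ θ in Set.Ioc 0 (2 * Real.pi), ‖F p θ‖) := by
    have hU : Summable (fun j : ℕ => ‖pochhammer' α j‖ / j.factorial * (‖ξ‖ * c) ^ j) :=
      summable_poch_one α (by positivity) hr1
    have hV : Summable (fun k : ℕ =>
        ‖pochhammer' (-α') k‖ / k.factorial * (‖ξ‖ / c) ^ k) :=
      summable_poch_one (-α') (by positivity) hr2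
    have hprod := hU.mul_of_nonneg hV (fun j => by positivity) (fun k => by positivity)
    have := hprod.mul_left ((2 * Real.pi) * (c * c ^ (-(m : ℤ) - 1)))
    apply this.congr
    intro p
    rw [hFintegral p]
    ring
  have hIntOn : ∀ p : ℕ × ℕ,
      MeasureTheory.IntegrableOn (F p) (Set.Ioc 0 (2 * Real.pi)) MeasureTheory.volume :=
    fun p => (hcont p).integrableOn_Ioc
  have hswap := MeasureTheory.hasSum_integral_of_summable_integral_norm
    (μ := MeasureTheory.volume.restrict (Set.Ioc 0 (2 * Real.pi))) (F := F) hIntOn hSummInt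
  -- identify the total integral with the circle integral
  have hint_eq : (∫ θ in Set.Ioc 0 (2 * Real.pi), ∑' p : ℕ × ℕ, F p θ)
      = ∮ ζ in C(0, c), (1 - ξ * ζ) ^ (-α) * (1 - ξ / ζ) ^ α' * ζ ^ (-(m : ℤ) - 1) := by
    rw [circleIntegral, intervalIntegral.integral_of_le Real.two_pi_pos.le]
    apply MeasureTheory.setIntegral_congr_fun measurableSet_Ioc
    intro θ _
    simp only [deriv_circleMap, smul_eq_mul]
    exact ((hPt θ).mul_left (circleMap 0 c θ * I)).tsum_eq
  rw [hint_eq] at hswap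
  -- compute each individual integral
  have hterm : ∀ p : ℕ × ℕ, (∫ θ in Set.Ioc 0 (2 * Real.pi), F p θ)
      = (pochhammer' α p.1 / (p.1.factorial : ℂ) * (pochhammer' (-α') p.2 / (p.2.factorial : ℂ)) *
          ξ ^ (p.1 + p.2)) * (if p.1 = p.2 + m then (2 * Real.pi * I) else 0) := by
    rintro ⟨j, k⟩
    have halg : ∀ z : ℂ, z ≠ 0 →
        (pochhammer' α j / (j.factorial : ℂ) * (ξ * z) ^ j) *
        (pochhammer' (-α') k / (k.factorial : ℂ) * (ξ / z) ^ k) * z ^ (-(m : ℤ) - 1)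
        = (pochhammer' α j / (j.factorial : ℂ) * (pochhammer' (-α') k / (k.factorial : ℂ)) *
            ξ ^ (j + k)) * z ^ ((j : ℤ) - k - m - 1) := by
      intro z hz
      rw [mul_pow, div_pow,
        show ((j : ℤ) - k - m - 1) = (j : ℤ) + (-(k : ℤ)) + (-(m : ℤ) - 1) by ring,
        zpow_add₀ hz, zpow_add₀ hz, zpow_natCast, zpow_neg, zpow_natCast, pow_add]
      field_simp
    have hstep : (∫ θ in Set.Ioc 0 (2 * Real.pi), F (j, k) θ)
        = ∮ z in C(0, c),
            (pochhammer' α j / (j.factorial : ℂ) * (pochhammer' (-α') k / (k.factorial : ℂ)) *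
              ξ ^ (j + k)) • z ^ ((j : ℤ) - k - m - 1) := by
      rw [circleIntegral, intervalIntegral.integral_of_le Real.two_pi_pos.le]
      apply (MeasureTheory.setIntegral_congr_fun measurableSet_Ioc _).symm
      intro θ _
      simp only [deriv_circleMap, smul_eq_mul, hF]
      rw [halg _ (hζ0 θ)]
    rw [hstep, circleIntegral.integral_smul]
    by_cases hjk : j = k + m
    · have hn : ((j : ℤ) - k - m - 1) = -1 := by subst hjk; push_cast; ring
      rw [hn, if_pos hjk]
      have h2 := circleIntegral.integral_sub_inv_of_mem_ball
        (Metric.mem_ball_self hc0 : (0 : ℂ) ∈ Metric.ball 0 c)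
      simp only [sub_zero] at h2
      simp only [zpow_neg_one]
      rw [h2, smul_eq_mul]
    · have hn : ((j : ℤ) - k - m - 1) ≠ -1 := by
        intro h
        apply hjk
        omega
      rw [if_neg hjk]
      have h3 := circleIntegral.integral_sub_zpow_of_ne hn 0 0 c
      simp only [sub_zero] at h3
      rw [h3, smul_zero, mul_zero]
  -- restrict the double sum to the diagonal j = k + m
  have hH : HasSum (fun p : ℕ × ℕ =>
      (pochhammer' α p.1 / (p.1.factorial : ℂ) * (pochhammer' (-α') p.2 / (p.2.factorial : ℂ)) *
          ξ ^ (p.1 + p.2)) * (if p.1 = p.2 + m then (2 * Real.pi * I) else 0))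
      (∮ ζ in C(0, c), (1 - ξ * ζ) ^ (-α) * (1 - ξ / ζ) ^ α' * ζ ^ (-(m : ℤ) - 1)) := by
    have hfe : (fun p : ℕ × ℕ => ∫ θ in Set.Ioc 0 (2 * Real.pi), F p θ)
        = fun p : ℕ × ℕ =>
        (pochhammer' α p.1 / (p.1.factorial : ℂ) * (pochhammer' (-α') p.2 / (p.2.factorial : ℂ)) *
          ξ ^ (p.1 + p.2)) * (if p.1 = p.2 + m then (2 * Real.pi * I) else 0) := funext hterm
    rw [← hfe]
    exact hswap
  have he : Function.Injective (fun k : ℕ => ((k + m, k) : ℕ × ℕ)) := by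
    intro a b hab
    simpa using congrArg Prod.snd hab
  have hvan : ∀ p : ℕ × ℕ, p ∉ Set.range (fun k : ℕ => ((k + m, k) : ℕ × ℕ)) →
      (pochhammer' α p.1 / (p.1.factorial : ℂ) * (pochhammer' (-α') p.2 / (p.2.factorial : ℂ)) *
          ξ ^ (p.1 + p.2)) * (if p.1 = p.2 + m then (2 * Real.pi * I) else 0) = 0 := by
    intro p hp
    rw [if_neg, mul_zero]
    intro hc'
    exact hp ⟨p.2, by rw [Prod.ext_iff]; exact ⟨by simp [hc'], rfl⟩⟩
  have hH2 := (he.hasSum_iff hvan).mpr hH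
  have h2πI : (2 * (Real.pi : ℂ) * I) ≠ 0 := by
    simp [Real.pi_ne_zero, Complex.I_ne_zero, Complex.ofReal_ne_zero]
  have hH3 : HasSum (fun k : ℕ =>
      pochhammer' α (k + m) / ((k + m).factorial : ℂ) *
        (pochhammer' (-α') k / (k.factorial : ℂ)) * ξ ^ (k + m + k))
      ((2 * Real.pi * I)⁻¹ *
        (∮ ζ in C(0, c), (1 - ξ * ζ) ^ (-α) * (1 - ξ / ζ) ^ α' * ζ ^ (-(m : ℤ) - 1))) := by
    have h4 := hH2.mul_left ((2 * (Real.pi : ℂ) * I)⁻¹)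
    have hfe2 : (fun k : ℕ => (2 * (Real.pi : ℂ) * I)⁻¹ *
        ((fun p : ℕ × ℕ =>
          (pochhammer' α p.1 / (p.1.factorial : ℂ) *
            (pochhammer' (-α') p.2 / (p.2.factorial : ℂ)) *
            ξ ^ (p.1 + p.2)) * (if p.1 = p.2 + m then (2 * Real.pi * I) else 0))
          ((fun k : ℕ => ((k + m, k) : ℕ × ℕ)) k)))
        = fun k : ℕ => pochhammer' α (k + m) / ((k + m).factorial : ℂ) *
          (pochhammer' (-α') k / (k.factorial : ℂ)) * ξ ^ (k + m + k) := by
      funext k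
      simp only [if_pos rfl, if_true]
      rw [mul_comm _ (2 * (Real.pi : ℂ) * I), ← mul_assoc, inv_mul_cancel₀ h2πI, one_mul]
    rw [← hfe2]
    exact h4
  -- final identification of the sum with the hypergeometric series
  have hterm2 : ∀ k : ℕ, pochhammer' α (k + m) / ((k + m).factorial : ℂ) *
        (pochhammer' (-α') k / (k.factorial : ℂ)) * ξ ^ (k + m + k)
      = (pochhammer' α m / (m.factorial : ℂ) * ξ ^ m) *
        (pochhammer' (α + m) k * pochhammer' (-α') k * (ξ ^ 2) ^ k /
          (pochhammer' (((m + 1 : ℕ)) : ℂ) k * (k.factorial : ℂ))) := by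
    intro k
    have h1 : pochhammer' α (k + m) = pochhammer' α m * pochhammer' (α + m) k := by
      rw [Nat.add_comm k m, poch_add]
    have h2 : (((k + m).factorial : ℂ)) = pochhammer' ((m : ℂ) + 1) k * (m.factorial : ℂ) := by
      rw [Nat.add_comm k m, ← poch_nat_factorial]
    have h3 : (((m + 1 : ℕ)) : ℂ) = (m : ℂ) + 1 := by push_cast; ring
    have h4 : ξ ^ (k + m + k) = (ξ ^ 2) ^ k * ξ ^ m := by
      rw [← pow_mul, ← pow_add]
      congr 1
      omega
    have hm0 : ((m.factorial : ℂ)) ≠ 0 := Nat.cast_ne_zero.mpr m.factorial_ne_zero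
    have hk0 : ((k.factorial : ℂ)) ≠ 0 := Nat.cast_ne_zero.mpr k.factorial_ne_zero
    have hpm : pochhammer' ((m : ℂ) + 1) k ≠ 0 := poch_nat_ne_zero m k
    rw [h1, h2, h3, h4]
    field_simp
  calc (2 * (Real.pi : ℂ) * I)⁻¹ *
      (∮ ζ in C(0, c), (1 - ξ * ζ) ^ (-α) * (1 - ξ / ζ) ^ α' * ζ ^ (-(m : ℤ) - 1))
      = ∑' k : ℕ, pochhammer' α (k + m) / ((k + m).factorial : ℂ) *
          (pochhammer' (-α') k / (k.factorial : ℂ)) * ξ ^ (k + m + k) := hH3.tsum_eq.symm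
    _ = ∑' k : ℕ, (pochhammer' α m / (m.factorial : ℂ) * ξ ^ m) *
          (pochhammer' (α + m) k * pochhammer' (-α') k * (ξ ^ 2) ^ k /
            (pochhammer' (((m + 1 : ℕ)) : ℂ) k * (k.factorial : ℂ))) := tsum_congr hterm2
    _ = (pochhammer' α m / (m.factorial : ℂ) * ξ ^ m) *
          ∑' k : ℕ, pochhammer' (α + m) k * pochhammer' (-α') k * (ξ ^ 2) ^ k /
            (pochhammer' (((m + 1 : ℕ)) : ℂ) k * (k.factorial : ℂ)) := tsum_mul_left
    _ = pochhammer' α m / (m.factorial : ℂ) * ξ ^ m *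
          gaussHyp (α + m) (-α') (m + 1) (ξ ^ 2) := by rw [gaussHyp]
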